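/- Independence of the charge component from the path-frame: if P_o and Q_o are two path-frames with the same pole o, then the corresponding charge components ẑ_P and ẑ_Q of a locally-valued 1-cocycle z are equivalent via the intertwiner s_a := z(q_{(a,o)} * p̄_{(a,o)}), i.e. s_{∂₀b} ẑ_P(b) = ẑ_Q(b) s_{∂₁b} for every 1-simplex b; moreover each s_a lies in R(a) by localization of the fundamental group. -/

import Mathlib

/-- A 1-simplex of a poset `K`: two faces and a support dominating both. -/
structure OneSimplex (K : Type*) [PartialOrder K] where
  face0 : K
  face1 : K
  supp : K
  le0 : face0 ≤ supp
  le1 : face1 ≤ supp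

/-- The reverse of a 1-simplex: same support, exchanged faces. -/
def OneSimplex.rev {K : Type*} [PartialOrder K] (b : OneSimplex K) : OneSimplex K :=
  ⟨b.face1, b.face0, b.supp, b.le1, b.le0⟩

/-- The degenerate 1-simplex `σ₀ a` at a 0-simplex `a`. -/
def OneSimplex.degenerate {K : Type*} [PartialOrder K] (a : K) : OneSimplex K :=
  ⟨a, a, a, le_refl a, le_refl a⟩

/-- A 2-simplex of a poset `K`, presented by its three vertices, the supports of its
three faces, and its own support, with all required order relations. Its faces
`∂₀c, ∂₁c, ∂₂c` satisfy the simplicial identities by construction. -/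
structure TwoSimplex (K : Type*) [PartialOrder K] where
  vstart : K
  vmid : K
  vend : K
  s0 : K
  s1 : K
  s2 : K
  supp : K
  hs0 : s0 ≤ supp
  hs1 : s1 ≤ supp
  hs2 : s2 ≤ supp
  h0s : vmid ≤ s0
  h0e : vend ≤ s0
  h1s : vstart ≤ s1
  h1e : vend ≤ s1
  h2s : vstart ≤ s2
  h2e : vmid ≤ s2

/-- The face `∂₀c` (from `vmid` to `vend`). -/
def TwoSimplex.face0 {K : Type*} [PartialOrder K] (c : TwoSimplex K) : OneSimplex K :=
  ⟨c.vend, c.vmid, c.s0, c.h0e, c.h0s⟩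

/-- The face `∂₁c` (from `vstart` to `vend`). -/
def TwoSimplex.face1 {K : Type*} [PartialOrder K] (c : TwoSimplex K) : OneSimplex K :=
  ⟨c.vend, c.vstart, c.s1, c.h1e, c.h1s⟩

/-- The face `∂₂c` (from `vstart` to `vmid`). -/
def TwoSimplex.face2 {K : Type*} [PartialOrder K] (c : TwoSimplex K) : OneSimplex K :=
  ⟨c.vmid, c.vstart, c.s2, c.h2e, c.h2s⟩

/-- A path in the poset `K` from `x` to `y`: a nonempty composable string of
1-simplices, `∂₁` of the first being `x` and `∂₀` of the last being `y`. -/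
inductive PPath (K : Type*) [PartialOrder K] : K → K → Type _
  | single (b : OneSimplex K) : PPath K b.face1 b.face0
  | cons (b : OneSimplex K) {x : K} (p : PPath K x b.face1) : PPath K x b.face0

/-- Composition of paths: `q.comp p` first traverses `p`, then `q`. -/
def PPath.comp {K : Type*} [PartialOrder K] : ∀ {x y w : K}, PPath K y w → PPath K x y → PPath K x w
  | _, _, _, .single b, p => .cons b p
  | _, _, _, .cons b q, p => .cons b (q.comp p)

/-- The reverse of a path. -/
def PPath.rev {K : Type*} [PartialOrder K] : ∀ {x y : K}, PPath K x y → PPath K y x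
  | _, _, .single b => .single b.rev
  | _, _, .cons b p => PPath.comp p.rev (.single b.rev)

/-- Multiplicative extension of a function on 1-simplices to paths:
`z(bₙ * ⋯ * b₁) = z(bₙ) ⋯ z(b₁)`. -/
def PPath.eval {K : Type*} [PartialOrder K] {M : Type*} [Monoid M]
    (z : OneSimplex K → M) : ∀ {x y : K}, PPath K x y → M
  | _, _, .single b => z b
  | _, _, .cons b p => z b * p.eval z

/-- The support of the path is causally disjoint from `o` (every 1-simplex of the path
has support `⊥ o`). -/
def PPath.suppDisjoint {K : Type*} [PartialOrder K] (perp : K → K → Prop) (o : K) :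
    ∀ {x y : K}, PPath K x y → Prop
  | _, _, .single b => perp b.supp o
  | _, _, .cons b p => perp b.supp o ∧ p.suppDisjoint perp o

/-- Homotopy of paths with the same endpoints: the equivalence relation generated by
elementary deformations (replacing `∂₁c` by `∂₀c * ∂₂c` for a 2-simplex `c`), compatible
with composition. -/
inductive PHomotopic {K : Type*} [PartialOrder K] : ∀ {x y : K}, PPath K x y → PPath K x y → Prop
  | refl {x y : K} (p : PPath K x y) : PHomotopic p p
  | symm {x y : K} {p q : PPath K x y} : PHomotopic p q → PHomotopic q p
  | trans {x y : K} {p q r : PPath K x y} : PHomotopic p q → PHomotopic q r → PHomotopic p r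
  | deform (c : TwoSimplex K) :
      PHomotopic (.single c.face1) ((PPath.single c.face0).comp (.single c.face2))
  | comp_congr {x y w : K} {q q' : PPath K y w} {p p' : PPath K x y} :
      PHomotopic q q' → PHomotopic p p' → PHomotopic (q.comp p) (q'.comp p')

/-- The charge component of a 1-cocycle with respect to a path-frame `P` with pole `o`:
`ẑ(b) := z(p_{(∂₀b,o)} * p̄_{(∂₁b,o)})`. -/
def chargeComp {K : Type*} [PartialOrder K] {M : Type*} [Monoid M] {o : K}
    (P : ∀ a : K, PPath K o a) (z : OneSimplex K → M) (b : OneSimplex K) : M :=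
  ((P b.face0).comp (P b.face1).rev).eval z


section Aux
variable {K : Type*} [PartialOrder K] {M : Type*} [Monoid M]

theorem PPath.eval_comp (z : OneSimplex K → M) :
    ∀ {x y w : K} (q : PPath K y w) (p : PPath K x y),
      (q.comp p).eval z = q.eval z * p.eval z
  | _, _, _, .single b, p => rfl
  | _, _, _, .cons b q, p => by
      show z b * (q.comp p).eval z = (z b * q.eval z) * p.eval z
      rw [PPath.eval_comp z q p, mul_assoc]

variable [StarMul M]

theorem zdeg_eq_one (z : OneSimplex K → M) (hzu : ∀ b : OneSimplex K, z b ∈ unitary M)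
    (hzc : ∀ c : TwoSimplex K, z c.face0 * z c.face2 = z c.face1) (a : K) :
    z (OneSimplex.degenerate a) = 1 := by
  have h := hzc ⟨a, a, a, a, a, a, a, le_refl a, le_refl a, le_refl a, le_refl a,
    le_refl a, le_refl a, le_refl a, le_refl a, le_refl a⟩
  have h : z (OneSimplex.degenerate a) * z (OneSimplex.degenerate a) =
      z (OneSimplex.degenerate a) := h
  have hu : star (z (OneSimplex.degenerate a)) * z (OneSimplex.degenerate a) = 1 :=
    Unitary.star_mul_self_of_mem (hzu _)
  calc z (OneSimplex.degenerate a)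
      = star (z (OneSimplex.degenerate a)) *
          (z (OneSimplex.degenerate a) * z (OneSimplex.degenerate a)) := by
        rw [← mul_assoc, hu, one_mul]
    _ = star (z (OneSimplex.degenerate a)) * z (OneSimplex.degenerate a) := by rw [h]
    _ = 1 := hu

theorem z_rev_mul (z : OneSimplex K → M) (hzu : ∀ b : OneSimplex K, z b ∈ unitary M)
    (hzc : ∀ c : TwoSimplex K, z c.face0 * z c.face2 = z c.face1) (b : OneSimplex K) :
    z b.rev * z b = 1 := by
  have h := hzc ⟨b.face1, b.face0, b.face1, b.supp, b.face1, b.supp, b.supp,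
    le_refl _, b.le1, le_refl _, b.le0, b.le1, le_refl _, le_refl _, b.le1, b.le0⟩
  have : z b.rev * z b = z (OneSimplex.degenerate b.face1) := h
  rw [this, zdeg_eq_one z hzu hzc]

theorem z_mul_rev (z : OneSimplex K → M) (hzu : ∀ b : OneSimplex K, z b ∈ unitary M)
    (hzc : ∀ c : TwoSimplex K, z c.face0 * z c.face2 = z c.face1) (b : OneSimplex K) :
    z b * z b.rev = 1 := by
  have := z_rev_mul z hzu hzc b.rev
  simpa [OneSimplex.rev] using this

theorem eval_rev (z : OneSimplex K → M) (hzu : ∀ b : OneSimplex K, z b ∈ unitary M)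
    (hzc : ∀ c : TwoSimplex K, z c.face0 * z c.face2 = z c.face1) :
    ∀ {x y : K} (p : PPath K x y),
      p.rev.eval z * p.eval z = 1 ∧ p.eval z * p.rev.eval z = 1
  | _, _, .single b => ⟨z_rev_mul z hzu hzc b, z_mul_rev z hzu hzc b⟩
  | _, _, .cons b p => by
      obtain ⟨ih1, ih2⟩ := eval_rev z hzu hzc p
      have hrev : (PPath.cons b p).rev.eval z = p.rev.eval z * z b.rev := by
        show (PPath.comp p.rev (.single b.rev)).eval z = _
        exact PPath.eval_comp z p.rev (.single b.rev)
      have heval : (PPath.cons b p).eval z = z b * p.eval z := rfl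
      constructor
      · rw [hrev, heval, mul_assoc, ← mul_assoc (z b.rev), z_rev_mul z hzu hzc b,
          one_mul, ih1]
      · rw [hrev, heval, mul_assoc, ← mul_assoc (p.eval z), ih2, one_mul,
          z_mul_rev z hzu hzc b]

omit [StarMul M] in
theorem eval_homotopic (z : OneSimplex K → M)
    (hzc : ∀ c : TwoSimplex K, z c.face0 * z c.face2 = z c.face1)
    {x y : K} {p q : PPath K x y} (h : PHomotopic p q) : p.eval z = q.eval z := by
  induction h with
  | refl => rfl
  | symm _ ih => exact ih.symm
  | trans _ _ ih1 ih2 => exact ih1.trans ih2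
  | deform c => exact (hzc c).symm
  | comp_congr _ _ ih1 ih2 => rw [PPath.eval_comp, PPath.eval_comp, ih1, ih2]

end Aux

theorem eval_mem_commutant {K : Type*} [PartialOrder K]
    {H : Type*} [NormedAddCommGroup H] [InnerProductSpace ℂ H] [CompleteSpace H]
    (perp : K → K → Prop) (hsymm : ∀ x y : K, perp x y → perp y x)
    (R : K → VonNeumannAlgebra H)
    (hhaag : ∀ a : K, (R a : Set (H →L[ℂ] H)) =
        ⋂ (b : K), ⋂ (_ : perp b a), ((R b).commutant : Set (H →L[ℂ] H)))
    (z : OneSimplex K → (H →L[ℂ] H))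
    (hloc : ∀ b : OneSimplex K, z b ∈ R b.supp) (o : K) :
    ∀ {x y : K} (p : PPath K x y), p.suppDisjoint perp o →
      p.eval z ∈ (R o).commutant := by
  have key : ∀ b : OneSimplex K, perp b.supp o → z b ∈ (R o).commutant := by
    intro b hb
    have h1 : z b ∈ (R b.supp : Set (H →L[ℂ] H)) := hloc b
    rw [hhaag b.supp] at h1
    simp only [Set.mem_iInter] at h1
    exact h1 o (hsymm _ _ hb)
  intro x y p
  induction p with
  | single b => exact fun hb => key b hb
  | cons b p ih => exact fun hb => mul_mem (key b hb.1) (ih hb.2)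

theorem charge_component_frame_independent {K : Type*} [PartialOrder K]
    {H : Type*} [NormedAddCommGroup H] [InnerProductSpace ℂ H] [CompleteSpace H]
    (perp : K → K → Prop)
    (hsymm : ∀ x y : K, perp x y → perp y x)
    (R : K → VonNeumannAlgebra H)
    (hiso : ∀ ⦃a b : K⦄, a ≤ b → (R a : Set (H →L[ℂ] H)) ⊆ (R b : Set (H →L[ℂ] H)))
    (hhaag : ∀ a : K, (R a : Set (H →L[ℂ] H)) =
        ⋂ (b : K), ⋂ (_ : perp b a), ((R b).commutant : Set (H →L[ℂ] H)))
    (hccconn : ∀ (o x y : K), perp x o → perp y o →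
        ∃ q : PPath K x y, q.suppDisjoint perp o)
    (hdef : ∀ (a o : K), perp a o → ∀ ℓ : PPath K a a,
        ∃ ℓ' : PPath K a a, PHomotopic ℓ ℓ' ∧ ℓ'.suppDisjoint perp o)
    (o : K) (P Q : ∀ a : K, PPath K o a)
    (hP : PHomotopic (P o) (PPath.single (OneSimplex.degenerate o)))
    (hQ : PHomotopic (Q o) (PPath.single (OneSimplex.degenerate o)))
    (z : OneSimplex K → (H →L[ℂ] H))
    (hzu : ∀ b : OneSimplex K, z b ∈ unitary (H →L[ℂ] H))
    (hzc : ∀ c : TwoSimplex K, z c.face0 * z c.face2 = z c.face1)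
    (hloc : ∀ b : OneSimplex K, z b ∈ R b.supp) :
    (∀ b : OneSimplex K,
        ((Q b.face0).comp (P b.face0).rev).eval z * chargeComp P z b =
          chargeComp Q z b * ((Q b.face1).comp (P b.face1).rev).eval z) ∧
    (∀ a : K, ((Q a).comp (P a).rev).eval z ∈ R a) := by
  constructor
  · intro b
    have hP0 := eval_rev z hzu hzc (P b.face0)
    have hQ1 := eval_rev z hzu hzc (Q b.face1)
    unfold chargeComp
    rw [PPath.eval_comp, PPath.eval_comp, PPath.eval_comp, PPath.eval_comp]
    rw [mul_assoc, ← mul_assoc ((P b.face0).rev.eval z), hP0.1, one_mul,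
        mul_assoc, ← mul_assoc ((Q b.face1).rev.eval z), hQ1.1, one_mul]
  · intro a
    rw [← SetLike.mem_coe, hhaag a]
    simp only [Set.mem_iInter]
    intro b hb
    obtain ⟨ℓ', hhom, hdisj⟩ := hdef a b (hsymm _ _ hb) ((Q a).comp (P a).rev)
    rw [eval_homotopic z hzc hhom]
    exact eval_mem_commutant perp hsymm R hhaag z hloc b ℓ' hdisj
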